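/- The three 3-cycles (1,2,3), (1,2,4), (1,2,5) form an independent set of size 3 in the alternating group A_5. -/

import Mathlib

def IsIndependent {G : Type*} [Group G] (A : Set G) : Prop :=
  ∀ a ∈ A, a ∉ Subgroup.closure (A \ {a})

lemma fix_of_closure {n : ℕ} (S : Set (Equiv.Perm (Fin n))) (x : Fin n)
    (hS : ∀ s ∈ S, s x = x) {g : Equiv.Perm (Fin n)}
    (hg : g ∈ Subgroup.closure S) : g x = x := by
  induction hg using Subgroup.closure_induction with
  | mem s hs => exact hS s hs
  | one => rfl
  | mul a b _ _ ha hb => simp [Equiv.Perm.mul_apply, hb, ha]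
  | inv a _ ha =>
      calc a⁻¹ x = a⁻¹ (a x) := by rw [ha]
      _ = x := Equiv.symm_apply_apply a x

theorem A5_three_cycles_independent :
    let c₁ : Equiv.Perm (Fin 5) := Equiv.swap 0 2 * Equiv.swap 0 1  -- (0 1 2)
    let c₂ : Equiv.Perm (Fin 5) := Equiv.swap 0 3 * Equiv.swap 0 1  -- (0 1 3)
    let c₃ : Equiv.Perm (Fin 5) := Equiv.swap 0 4 * Equiv.swap 0 1  -- (0 1 4)
    ({c₁, c₂, c₃} : Set (Equiv.Perm (Fin 5))) ⊆ alternatingGroup (Fin 5) ∧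
    IsIndependent ({c₁, c₂, c₃} : Set (Equiv.Perm (Fin 5))) ∧
    ({c₁, c₂, c₃} : Set (Equiv.Perm (Fin 5))).ncard = 3 := by
  intro c₁ c₂ c₃
  refine ⟨?_, ?_, ?_⟩
  · intro g hg
    rcases hg with h | h | h <;> subst h <;> rw [SetLike.mem_coe, Equiv.Perm.mem_alternatingGroup] <;> decide
  · intro a ha hmem
    rcases ha with h | h | h <;> subst h
    · have := fix_of_closure _ (2 : Fin 5) ?_ hmem
      · revert this; decide
      · rintro s ⟨hs, hne⟩
        rcases hs with h | h | h
        · exact absurd h hne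
        · subst h; decide
        · subst h; decide
    · have := fix_of_closure _ (3 : Fin 5) ?_ hmem
      · revert this; decide
      · rintro s ⟨hs, hne⟩
        rcases hs with h | h | h
        · subst h; decide
        · exact absurd h hne
        · subst h; decide
    · have := fix_of_closure _ (4 : Fin 5) ?_ hmem
      · revert this; decide
      · rintro s ⟨hs, hne⟩
        rcases hs with h | h | h
        · subst h; decide
        · subst h; decide
        · exact absurd h hne
  · rw [Set.ncard_eq_three]
    exact ⟨c₁, c₂, c₃, by decide, by decide, by decide, rfl⟩
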